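/- Let Ω₁,…,Ω_N ⊆ ℝ² be pairwise disjoint bounded open convex sets. Then the set of triple points T = ⋃_{i<j<k} ∂Ω_i ∩ ∂Ω_j ∩ ∂Ω_k is finite. -/
import Mathlib

open FiniteDimensional

/-- Strict separation of two disjoint open convex sets, with the separating functional
taking the separating value at any two common frontier points. -/
lemma sep_aux {E : Type*} [NormedAddCommGroup E] [NormedSpace ℝ E]
    {A B : Set E} (hAc : Convex ℝ A) (hAo : IsOpen A) (hBc : Convex ℝ B) (hBo : IsOpen B)
    (hd : Disjoint A B) {x y : E} (hx : x ∈ frontier A) (hxB : x ∈ frontier B)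
    (hy : y ∈ frontier A) (hyB : y ∈ frontier B) :
    ∃ (f : E →L[ℝ] ℝ) (u : ℝ), (∀ a ∈ A, f a < u) ∧ (∀ b ∈ B, u < f b) ∧ f x = u ∧ f y = u := by
  obtain ⟨f, u, h1, h2⟩ := geometric_hahn_banach_open_open hAc hAo hBc hBo hd
  have hle : ∀ z ∈ closure A, f z ≤ u := fun z hz =>
    closure_minimal (fun a ha => (h1 a ha).le) (isClosed_le f.continuous continuous_const) hz
  have hge : ∀ z ∈ closure B, u ≤ f z := fun z hz =>
    closure_minimal (fun b hb => (h2 b hb).le) (isClosed_le continuous_const f.continuous) hz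
  exact ⟨f, u, h1, h2,
    le_antisymm (hle x (frontier_subset_closure hx)) (hge x (frontier_subset_closure hxB)),
    le_antisymm (hle y (frontier_subset_closure hy)) (hge y (frontier_subset_closure hyB))⟩

/-- For three pairwise disjoint open convex sets in the plane, the common frontier
is a subsingleton. -/
lemma triple_boundary_subsingleton {A B C : Set (EuclideanSpace ℝ (Fin 2))}
    (hAo : IsOpen A) (hAc : Convex ℝ A) (hBo : IsOpen B) (hBc : Convex ℝ B)
    (hCo : IsOpen C) (hCc : Convex ℝ C)
    (hAB : Disjoint A B) (hAC : Disjoint A C) (hBC : Disjoint B C) :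
    Set.Subsingleton (frontier A ∩ frontier B ∩ frontier C) := by
  rintro x ⟨⟨hxA, hxB⟩, hxC⟩ y ⟨⟨hyA, hyB⟩, hyC⟩
  by_contra hne
  -- the three sets are nonempty
  have hAne : A.Nonempty := by
    rcases A.eq_empty_or_nonempty with rfl | h
    · simp at hxA
    · exact h
  have hBne : B.Nonempty := by
    rcases B.eq_empty_or_nonempty with rfl | h
    · simp at hxB
    · exact h
  have hCne : C.Nonempty := by
    rcases C.eq_empty_or_nonempty with rfl | h
    · simp at hxC
    · exact h
  obtain ⟨a, ha⟩ := hAne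
  obtain ⟨b, hb⟩ := hBne
  obtain ⟨c, hc⟩ := hCne
  obtain ⟨f, u, hfA, hfB, hfx, hfy⟩ := sep_aux hAc hAo hBc hBo hAB hxA hxB hyA hyB
  obtain ⟨g, v, hgA, hgC, hgx, hgy⟩ := sep_aux hAc hAo hCc hCo hAC hxA hxC hyA hyC
  obtain ⟨h, w, hhB, hhC, hhx, hhy⟩ := sep_aux hBc hBo hCc hCo hBC hxB hxC hyB hyC
  have hfa := hfA a ha
  have hfb := hfB b hb
  have hga := hgA a ha
  have hgc := hgC c hc
  have hhb := hhB b hb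
  have hhc := hhC c hc
  -- f, g, h all vanish on the direction y - x
  have hfd : f (y - x) = 0 := by rw [map_sub, hfx, hfy, sub_self]
  have hgd : g (y - x) = 0 := by rw [map_sub, hgx, hgy, sub_self]
  have hhd : h (y - x) = 0 := by rw [map_sub, hhx, hhy, sub_self]
  have hfe : 0 < f (b - a) := by rw [map_sub]; linarith
  -- {y - x, b - a} is linearly independent, hence spans the plane
  have hind : LinearIndependent ℝ ![y - x, b - a] := by
    rw [LinearIndependent.pair_iff]
    intro s t hst
    have h0 : f (s • (y - x) + t • (b - a)) = 0 := by rw [hst, map_zero]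
    rw [map_add, map_smul, map_smul, hfd, smul_eq_mul, smul_eq_mul, mul_zero, zero_add] at h0
    have ht : t = 0 := by
      rcases mul_eq_zero.1 h0 with h' | h'
      · exact h'
      · exact absurd h' (ne_of_gt hfe)
    refine ⟨?_, ht⟩
    have hd0 : y - x ≠ 0 := sub_ne_zero.2 (Ne.symm hne)
    rw [ht, zero_smul, add_zero] at hst
    exact (smul_eq_zero.1 hst).resolve_right hd0
  have hspan : Submodule.span ℝ (Set.range ![y - x, b - a]) = ⊤ :=
    hind.span_eq_top_of_card_eq_finrank (by simp [finrank_euclideanSpace_fin])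
  -- any functional vanishing on both vectors vanishes identically
  have key : ∀ (φ : EuclideanSpace ℝ (Fin 2) →L[ℝ] ℝ),
      φ (y - x) = 0 → φ (b - a) = 0 → ∀ z, φ z = 0 := by
    intro φ h1 h2 z
    have hle : Submodule.span ℝ (Set.range ![y - x, b - a]) ≤
        LinearMap.ker (φ : EuclideanSpace ℝ (Fin 2) →ₗ[ℝ] ℝ) := by
      rw [Submodule.span_le]
      rintro z' ⟨i, rfl⟩
      fin_cases i
      · simpa using h1
      · simpa using h2
    have hz : z ∈ LinearMap.ker (φ : EuclideanSpace ℝ (Fin 2) →ₗ[ℝ] ℝ) := by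
      apply hle
      rw [hspan]
      trivial
    exact hz
  -- g and h are proportional to f
  have Rg : ∀ z, f (b - a) * g z = g (b - a) * f z := by
    intro z
    have := key (f (b - a) • g - g (b - a) • f)
      (by simp [hfd, hgd]) (by simp [mul_comm]) z
    simp only [ContinuousLinearMap.sub_apply, ContinuousLinearMap.smul_apply,
      smul_eq_mul, sub_eq_zero] at this
    exact this
  have Rh : ∀ z, f (b - a) * h z = h (b - a) * f z := by
    intro z
    have := key (f (b - a) • h - h (b - a) • f)
      (by simp [hfd, hhd]) (by simp [mul_comm]) z
    simp only [ContinuousLinearMap.sub_apply, ContinuousLinearMap.smul_apply,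
      smul_eq_mul, sub_eq_zero] at this
    exact this
  have Rga := Rg a; have Rgc := Rg c; have Rgx := Rg x
  have Rhb := Rh b; have Rhc := Rh c; have Rhx := Rh x
  rw [hgx, hfx] at Rgx
  rw [hhx, hfx] at Rhx
  -- sign computations
  have hge_pos : 0 < g (b - a) := by nlinarith
  have hhe_neg : h (b - a) < 0 := by nlinarith
  have h1 : u < f c := by nlinarith
  have h2 : f c < u := by nlinarith
  linarith

/-- For pairwise disjoint bounded open convex sets in ℝ², the set of triple points
(points on at least three grain boundaries) is finite. -/
theorem triple_points_finite_2D (N : ℕ)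
    (G : Fin N → Set (EuclideanSpace ℝ (Fin 2)))
    (hopen : ∀ j, IsOpen (G j)) (hconv : ∀ j, Convex ℝ (G j))
    (hbdd : ∀ j, Bornology.IsBounded (G j))
    (hdisj : Pairwise (Function.onFun Disjoint G)) :
    Set.Finite {x | ∃ i j k : Fin N, i < j ∧ j < k ∧
      x ∈ frontier (G i) ∧ x ∈ frontier (G j) ∧ x ∈ frontier (G k)} := by
  have hsub : {x | ∃ i j k : Fin N, i < j ∧ j < k ∧
      x ∈ frontier (G i) ∧ x ∈ frontier (G j) ∧ x ∈ frontier (G k)} ⊆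
      ⋃ p ∈ {p : Fin N × Fin N × Fin N | p.1 < p.2.1 ∧ p.2.1 < p.2.2},
        (frontier (G p.1) ∩ frontier (G p.2.1) ∩ frontier (G p.2.2)) := by
    rintro x ⟨i, j, k, hij, hjk, h1, h2, h3⟩
    exact Set.mem_iUnion₂.2 ⟨(i, j, k), ⟨hij, hjk⟩, ⟨⟨h1, h2⟩, h3⟩⟩
  refine Set.Finite.subset (Set.Finite.biUnion (Set.toFinite _) ?_) hsub
  rintro ⟨i, j, k⟩ ⟨hij, hjk⟩
  exact (triple_boundary_subsingleton (hopen i) (hconv i) (hopen j) (hconv j)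
    (hopen k) (hconv k) (hdisj hij.ne) (hdisj (hij.trans hjk).ne) (hdisj hjk.ne)).finite
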